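/- Let $V$ be a real inner product space, let $S_1 \subseteq S_2$ be finite-dimensional affine subspaces of $V$, let $v \in S_1$ and $\rho > 0$. Let $\beta_{21} : \mathcal{A}_c(S_1) \to \mathcal{A}(S_2)$ be given on functions by $\beta_{21}(f)(x, s_2) = f(xu + s_{21}, s_1)$ where $s_2 = s_1 + s_{21}$ with $s_1 \in S_1$, $s_{21} \in S_2^0 \ominus S_1^0$, interpreted via functional calculus so that $\beta_{21}(f)(x,s_2)$ depends only on the values of $f(\cdot, s_1)$ at the points $\pm\sqrt{x^2 + \|s_{21}\|^2}$. If $\mathrm{supp}(f)$ is contained in the closed ball of radius $\rho$ centered at $(0,v)$ in $\mathbb{R} \times S_1$, then $\mathrm{supp}(\beta_{21}(f))$ is contained in the closed ball of radius $\rho$ centered at $(0,v)$ in $\mathbb{R} \times S_2$. In particular $\beta_{21}$ maps compactly supported elements to compactly supported elements. -/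

import Mathlib

/-- support estimate for the connecting map `β₂₁ : 𝒜_c(S₁) → 𝒜(S₂)`.
`V` is a real inner product space, `S₁ ⊆ S₂` finite-dimensional affine subspaces,
`v ∈ S₁`, `ρ > 0`.  The element `f` of `𝒜_c(S₁)` is encoded as a (Clifford-algebra
valued) function `f : ℝ → V → A` (only its values `f t s` for `s ∈ S₁` matter), and
`g = β₂₁(f)` as a function `g : ℝ → V → A`; the defining property of `β₂₁` via
functional calculus is encoded by the hypothesis `hβ`: for `s₂ = s₁ + s₂₁ ∈ S₂` with
`s₁ ∈ S₁` and `s₂₁ ⊥ S₁⁰`, the value `g x s₂` vanishes as soon as `f (· , s₁)` vanishes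
at the two spectral points `±√(x² + ‖s₂₁‖²)` of `xu + s₂₁`.  Conclusion: if
`supp f ⊆ D¹((0,v),ρ)` then `supp g ⊆ D²((0,v),ρ)`; in particular `β₂₁` maps compactly
supported elements to compactly supported elements. -/
theorem stmt5 {V : Type*} [NormedAddCommGroup V] [InnerProductSpace ℝ V]
    {A : Type*} [Zero A]
    (S₁ S₂ : AffineSubspace ℝ V) (hS : S₁ ≤ S₂)
    [FiniteDimensional ℝ S₁.direction] [FiniteDimensional ℝ S₂.direction]
    (v : V) (hv : v ∈ S₁) (ρ : ℝ) (hρ : 0 < ρ)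
    (f g : ℝ → V → A)
    -- `supp f` is contained in the closed ball of radius `ρ` about `(0,v)` in `ℝ × S₁`:
    (hsupp : ∀ (t : ℝ) (s : V), s ∈ S₁ → ρ ^ 2 < t ^ 2 + ‖s - v‖ ^ 2 → f t s = 0)
    -- defining property of `g = β₂₁ f` via functional calculus:
    (hβ : ∀ (x : ℝ) (s₂ : V), s₂ ∈ S₂ →
      ∀ s₁ s₂₁ : V, s₁ ∈ S₁ → s₂₁ ∈ S₁.directionᗮ → s₂ = s₁ + s₂₁ →
        f (Real.sqrt (x ^ 2 + ‖s₂₁‖ ^ 2)) s₁ = 0 →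
        f (-Real.sqrt (x ^ 2 + ‖s₂₁‖ ^ 2)) s₁ = 0 →
        g x s₂ = 0) :
    -- `supp g` is contained in the closed ball of radius `ρ` about `(0,v)` in `ℝ × S₂`:
    ∀ (x : ℝ) (s₂ : V), s₂ ∈ S₂ → ρ ^ 2 < x ^ 2 + ‖s₂ - v‖ ^ 2 → g x s₂ = 0 := by
  intro x s₂ hs₂ hlt
  set K := S₁.direction
  set p : V := (K.orthogonalProjectionOnto (s₂ - v) : V)
  set q : V := s₂ - v - p with hq
  have hqmem : q ∈ Kᗮ := K.sub_starProjection_mem_orthogonal (s₂ - v)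
  have hs₁ : v + p ∈ S₁ := by
    have : p ∈ K := (K.orthogonalProjectionOnto (s₂ - v)).2
    have h2 := S₁.vadd_mem_of_mem_direction this hv
    simpa [add_comm] using h2
  have hdecomp : s₂ = (v + p) + q := by simp [hq]
  have hpyth : ‖s₂ - v‖ ^ 2 = ‖p‖ ^ 2 + ‖q‖ ^ 2 := by
    have h := norm_add_sq_real p q
    have : inner ℝ p q = (0 : ℝ) :=
      (Submodule.mem_orthogonal K q).1 hqmem p (K.orthogonalProjectionOnto (s₂ - v)).2
    have hsum : p + q = s₂ - v := by simp [hq]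
    rw [hsum] at h; linarith
  have hnn : (0:ℝ) ≤ x ^ 2 + ‖q‖ ^ 2 := by positivity
  have hkey : ρ ^ 2 < (Real.sqrt (x ^ 2 + ‖q‖ ^ 2)) ^ 2 + ‖(v + p) - v‖ ^ 2 := by
    rw [Real.sq_sqrt hnn]
    have : (v + p) - v = p := by abel
    rw [this]; linarith
  have hkey' : ρ ^ 2 < (-Real.sqrt (x ^ 2 + ‖q‖ ^ 2)) ^ 2 + ‖(v + p) - v‖ ^ 2 := by
    rwa [neg_sq]
  exact hβ x s₂ hs₂ (v + p) q hs₁ hqmem hdecomp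
    (hsupp _ _ hs₁ hkey) (hsupp _ _ hs₁ hkey')
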